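/- Let π : E → M be a vector bundle with nonlinear connection Hor. The following are equivalent: (1) the linearized connection on π*E is flat (curvature tensor vanishes identically); (2) the set of Hor-basic vector fields (vector fields of the form X^H + η^∨ with X ∈ 𝔛(M), η ∈ Sec(E)) is closed under Lie bracket; (3) for all Hor-basic Y₁, Y₂ the section κ([Y₁,Y₂]) along π is basic; (4) for all X₁, X₂ ∈ 𝔛(M) and η₁, η₂ ∈ Sec(E), the section R(X₁,X₂) + D_{X₁^H}η₂ − D_{X₂^H}η₁ along π is basic. -/

import Mathlib

/- STATEMENT 19: flatness of the linearized connection.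
Local model as in Statement 18: `E = M × V`, nonlinear connection with horizontal
coefficient `γ`, horizontal lift `X^H(m,y) = (X m, γ m y (X m))`, vertical lift
`η^∨(m,y) = (0, η m)`, connector `κ`, covariant derivative `D` and curvature of the
linearized connection, and curvature `R` of the nonlinear connection. -/

section Lin
variable {M V : Type*} [NormedAddCommGroup M] [NormedSpace ℝ M]
  [NormedAddCommGroup V] [NormedSpace ℝ V]

noncomputable def lieBkt (X Y : M × V → M × V) : M × V → M × V :=
  fun p => fderiv ℝ Y p (X p) - fderiv ℝ X p (Y p)

def hLift (γ : M → V → M → V) (X : M → M) : M × V → M × V :=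
  fun p => (X p.1, γ p.1 p.2 (X p.1))

def vLift (η : M → V) : M × V → M × V := fun p => ((0 : M), η p.1)

def connector (γ : M → V → M → V) (W : M × V → M × V) : M × V → V :=
  fun p => (W p).2 - γ p.1 p.2 (W p).1

noncomputable def covD (γ : M → V → M → V) (W : M × V → M × V) (σ : M × V → V) :
    M × V → V :=
  fun p => fderiv ℝ σ p (W p) - (fderiv ℝ (fun y' => γ p.1 y' (W p).1) p.2) (σ p)

noncomputable def curvLin (γ : M → V → M → V) (Y₁ Y₂ : M × V → M × V)
    (σ : M × V → V) : M × V → V :=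
  fun p => covD γ Y₁ (covD γ Y₂ σ) p - covD γ Y₂ (covD γ Y₁ σ) p
    - covD γ (lieBkt Y₁ Y₂) σ p

noncomputable def curvHor (γ : M → V → M → V) (X₁ X₂ : M → M) : M × V → V :=
  connector γ (lieBkt (hLift γ X₁) (hLift γ X₂))

/-- A section along `π` is basic if it is the pullback of a section of `E`. -/
def IsBasicSec (s : M × V → V) : Prop := ∃ α : M → V, ∀ p, s p = α p.1

/-- A vector field on `E` is Hor-basic if it is of the form `X^H + η^∨` with
`X ∈ 𝔛(M)` and `η ∈ Sec(E)` (smooth). -/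
def IsHorBasic (γ : M → V → M → V) (Y : M × V → M × V) : Prop :=
  ∃ (X : M → M) (η : M → V), ContDiff ℝ (⊤ : ℕ∞) X ∧ ContDiff ℝ (⊤ : ℕ∞) η ∧
    ∀ p, Y p = hLift γ X p + vLift η p

namespace Flat19

def jV : V →L[ℝ] M × V × M :=
  (0 : V →L[ℝ] M).prod ((ContinuousLinearMap.id ℝ V).prod 0)

@[simp] lemma jV_apply (v : V) : (jV (M := M) v) = ((0 : M), v, (0 : M)) := rfl

variable (γ : M → V → M → V)

noncomputable def D1 : M × V × M → (M × V × M) →L[ℝ] V :=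
  fderiv ℝ (fun z : M × V × M => γ z.1 z.2.1 z.2.2)

noncomputable def D2 : M × V × M → (M × V × M) →L[ℝ] (M × V × M) →L[ℝ] V :=
  fderiv ℝ (D1 γ)

noncomputable def Psi (p : M × V) (u₁ : M) (w₁ : V) (u₂ : M) (w₂ : V)
    (ξ₁ ξ₂ : M) (v : V) : V :=
  D2 γ (p.1, p.2, u₁) (u₂, w₂, ξ₁) (jV v)
  - D2 γ (p.1, p.2, u₂) (u₁, w₁, ξ₂) (jV v)
  + D1 γ (p.1, p.2, u₁) (jV (D1 γ (p.1, p.2, u₂) (jV v)))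
  - D1 γ (p.1, p.2, u₂) (jV (D1 γ (p.1, p.2, u₁) (jV v)))
  + D1 γ (p.1, p.2, ξ₂ - ξ₁) (jV v)

variable {γ}
variable (hγ : ContDiff ℝ (⊤ : ℕ∞) (fun p : M × V × M => γ p.1 p.2.1 p.2.2))

lemma le1 : ((⊤ : ℕ∞) : WithTop ℕ∞) ≠ 0 := by
  simp

lemma leS : ((⊤ : ℕ∞) : WithTop ℕ∞) + 1 ≤ ((⊤ : ℕ∞) : WithTop ℕ∞) := by
  exact_mod_cast le_top

section basics
include hγ

lemma hD1 : ContDiff ℝ (⊤ : ℕ∞) (D1 γ) := hγ.fderiv_right leS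

lemma hD2 : ContDiff ℝ (⊤ : ℕ∞) (D2 γ) := (hD1 hγ).fderiv_right leS

lemma Dsym (z : M × V × M) (a b : M × V × M) : D2 γ z a b = D2 γ z b a :=
  second_derivative_symmetric
    (fun y => ((hγ.differentiable le1) y).hasFDerivAt)
    (((hD1 hγ).differentiable le1) z).hasFDerivAt a b

end basics

lemma hasFDerivAt_sliceY {W' : Type*} [NormedAddCommGroup W'] [NormedSpace ℝ W']
    {f : M × V × M → W'} (m x : M) (y : V)
    (hf : DifferentiableAt ℝ f (m, y, x)) :
    HasFDerivAt (fun y' => f (m, y', x)) ((fderiv ℝ f (m, y, x)).comp jV) y := by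
  have hι : HasFDerivAt (fun y' : V => ((m, (y', x)) : M × V × M)) (jV (M := M)) y :=
    (hasFDerivAt_const m y).prodMk ((hasFDerivAt_id y).prodMk (hasFDerivAt_const x y))
  exact (hf.hasFDerivAt.comp y hι :)

include hγ

lemma sliceγ (m x : M) (y : V) :
    HasFDerivAt (fun y' => γ m y' x) ((D1 γ (m, y, x)).comp jV) y :=
  hasFDerivAt_sliceY m x y ((hγ.differentiable le1).differentiableAt)

lemma sliceD1 (m x : M) (y : V) :
    HasFDerivAt (fun y' => D1 γ (m, y', x)) ((D2 γ (m, y, x)).comp jV) y :=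
  hasFDerivAt_sliceY m x y (((hD1 hγ).differentiable le1).differentiableAt)

lemma covD_eq (W : M × V → M × V) (σ : M × V → V) (p : M × V) :
    covD γ W σ p = fderiv ℝ σ p (W p) - D1 γ (p.1, p.2, (W p).1) (jV (σ p)) := by
  unfold covD
  rw [(sliceγ hγ p.1 (W p).1 p.2).fderiv]
  rfl

omit hγ

variable {X X₁ X₂ : M → M} {η η₁ η₂ : M → V}

def ΛX (X' : M →L[ℝ] M) : (M × V) →L[ℝ] (M × V × M) :=
  (ContinuousLinearMap.fst ℝ M V).prod ((ContinuousLinearMap.snd ℝ M V).prod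
    (X'.comp (ContinuousLinearMap.fst ℝ M V)))

@[simp] lemma ΛX_apply (X' : M →L[ℝ] M) (h : M × V) :
    ΛX X' h = (h.1, h.2, X' h.1) := rfl

include hγ

lemma hasFDerivAt_gam (hX : ContDiff ℝ (⊤ : ℕ∞) X) (p : M × V) :
    HasFDerivAt (fun q : M × V => γ q.1 q.2 (X q.1))
      ((D1 γ (p.1, p.2, X p.1)).comp (ΛX (fderiv ℝ X p.1))) p := by
  have hζ : HasFDerivAt (fun q : M × V => ((q.1, (q.2, X q.1)) : M × V × M))
      (ΛX (fderiv ℝ X p.1)) p :=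
    (hasFDerivAt_fst).prodMk ((hasFDerivAt_snd).prodMk
      (((hX.differentiable le1 p.1).hasFDerivAt).comp p hasFDerivAt_fst))
  exact (((hγ.differentiable le1) _).hasFDerivAt.comp p hζ :)

lemma hasFDerivAt_hLift (hX : ContDiff ℝ (⊤ : ℕ∞) X) (p : M × V) :
    HasFDerivAt (hLift γ X)
      (((fderiv ℝ X p.1).comp (ContinuousLinearMap.fst ℝ M V)).prod
        ((D1 γ (p.1, p.2, X p.1)).comp (ΛX (fderiv ℝ X p.1)))) p :=
  ((((hX.differentiable le1) p.1).hasFDerivAt).comp p hasFDerivAt_fst).prodMk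
    (hasFDerivAt_gam hγ hX p)

omit hγ

lemma hasFDerivAt_vLift (hη : ContDiff ℝ (⊤ : ℕ∞) η) (p : M × V) :
    HasFDerivAt (vLift η)
      ((0 : (M × V) →L[ℝ] M).prod
        ((fderiv ℝ η p.1).comp (ContinuousLinearMap.fst ℝ M V))) p :=
  (hasFDerivAt_const (0 : M) p).prodMk
    ((((hη.differentiable le1) p.1).hasFDerivAt).comp p hasFDerivAt_fst)

def Yb (γ : M → V → M → V) (X : M → M) (η : M → V) : M × V → M × V :=
  fun q => hLift γ X q + vLift η q

include hγ

lemma hasFDerivAt_Yb (hX : ContDiff ℝ (⊤ : ℕ∞) X) (hη : ContDiff ℝ (⊤ : ℕ∞) η)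
    (p : M × V) :
    HasFDerivAt (Yb γ X η)
      ((((fderiv ℝ X p.1).comp (ContinuousLinearMap.fst ℝ M V)).prod
        ((D1 γ (p.1, p.2, X p.1)).comp (ΛX (fderiv ℝ X p.1))))
       + ((0 : (M × V) →L[ℝ] M).prod
        ((fderiv ℝ η p.1).comp (ContinuousLinearMap.fst ℝ M V)))) p :=
  (hasFDerivAt_hLift hγ hX p).add (hasFDerivAt_vLift hη p)

lemma fderiv_Yb_apply (hX : ContDiff ℝ (⊤ : ℕ∞) X) (hη : ContDiff ℝ (⊤ : ℕ∞) η)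
    (p : M × V) (h : M × V) :
    fderiv ℝ (Yb γ X η) p h =
      (fderiv ℝ X p.1 h.1,
       D1 γ (p.1, p.2, X p.1) (h.1, h.2, fderiv ℝ X p.1 h.1) + fderiv ℝ η p.1 h.1) := by
  rw [(hasFDerivAt_Yb hγ hX hη p).fderiv]
  simp

lemma contDiff_hLift (hX : ContDiff ℝ (⊤ : ℕ∞) X) : ContDiff ℝ (⊤ : ℕ∞) (hLift γ X) :=
  (hX.comp contDiff_fst).prodMk
    (hγ.comp (contDiff_fst.prodMk (contDiff_snd.prodMk (hX.comp contDiff_fst))))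

omit hγ
lemma contDiff_vLift (hη : ContDiff ℝ (⊤ : ℕ∞) η) : ContDiff ℝ (⊤ : ℕ∞) (vLift η) :=
  (contDiff_const).prodMk (hη.comp contDiff_fst)
include hγ

lemma contDiff_Yb (hX : ContDiff ℝ (⊤ : ℕ∞) X) (hη : ContDiff ℝ (⊤ : ℕ∞) η) :
    ContDiff ℝ (⊤ : ℕ∞) (Yb γ X η) :=
  (contDiff_hLift hγ hX).add (contDiff_vLift hη)

variable (γ)

noncomputable def XB (X₁ X₂ : M → M) : M → M :=
  fun m => fderiv ℝ X₂ m (X₁ m) - fderiv ℝ X₁ m (X₂ m)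

noncomputable def Sfun (X₁ X₂ : M → M) (η₁ η₂ : M → V) : M × V → V := fun p =>
  D1 γ (p.1, p.2, X₂ p.1)
      (X₁ p.1, γ p.1 p.2 (X₁ p.1) + η₁ p.1, fderiv ℝ X₂ p.1 (X₁ p.1))
  + fderiv ℝ η₂ p.1 (X₁ p.1)
  - D1 γ (p.1, p.2, X₁ p.1)
      (X₂ p.1, γ p.1 p.2 (X₂ p.1) + η₂ p.1, fderiv ℝ X₁ p.1 (X₂ p.1))
  - fderiv ℝ η₁ p.1 (X₂ p.1)
  - γ p.1 p.2 (XB X₁ X₂ p.1)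

variable {γ}
include hγ

lemma Yb_apply (p : M × V) :
    Yb γ X η p = (X p.1, γ p.1 p.2 (X p.1) + η p.1) := by
  simp [Yb, hLift, vLift, Prod.ext_iff]

lemma lieBkt_Yb_fst (hX₁ : ContDiff ℝ (⊤ : ℕ∞) X₁) (hX₂ : ContDiff ℝ (⊤ : ℕ∞) X₂)
    (hη₁ : ContDiff ℝ (⊤ : ℕ∞) η₁) (hη₂ : ContDiff ℝ (⊤ : ℕ∞) η₂) (p : M × V) :
    (lieBkt (Yb γ X₁ η₁) (Yb γ X₂ η₂) p).1 = XB X₁ X₂ p.1 := by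
  simp [lieBkt, fderiv_Yb_apply hγ hX₁ hη₁, fderiv_Yb_apply hγ hX₂ hη₂,
    Yb_apply hγ, XB]

lemma s_eq (hX₁ : ContDiff ℝ (⊤ : ℕ∞) X₁) (hX₂ : ContDiff ℝ (⊤ : ℕ∞) X₂)
    (hη₁ : ContDiff ℝ (⊤ : ℕ∞) η₁) (hη₂ : ContDiff ℝ (⊤ : ℕ∞) η₂) (p : M × V) :
    connector γ (lieBkt (Yb γ X₁ η₁) (Yb γ X₂ η₂)) p = Sfun γ X₁ X₂ η₁ η₂ p := by
  simp only [connector, lieBkt, fderiv_Yb_apply hγ hX₁ hη₁, fderiv_Yb_apply hγ hX₂ hη₂,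
    Yb_apply hγ, Sfun, XB, Prod.fst_sub, Prod.snd_sub]
  abel

lemma S2 (hX₁ : ContDiff ℝ (⊤ : ℕ∞) X₁) (hX₂ : ContDiff ℝ (⊤ : ℕ∞) X₂)
    (hη₁ : ContDiff ℝ (⊤ : ℕ∞) η₁) (hη₂ : ContDiff ℝ (⊤ : ℕ∞) η₂) (m : M) (y : V) :
    ∃ Φ : V →L[ℝ] V, HasFDerivAt (fun y' => Sfun γ X₁ X₂ η₁ η₂ (m, y')) Φ y ∧
      ∀ v, Φ v = - Psi γ (m, y) (X₁ m) (γ m y (X₁ m) + η₁ m) (X₂ m)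
        (γ m y (X₂ m) + η₂ m) (fderiv ℝ X₁ m (X₂ m)) (fderiv ℝ X₂ m (X₁ m)) v := by
  have hT1 : HasFDerivAt
      (fun y' => D1 γ (m, y', X₂ m)
        (X₁ m, γ m y' (X₁ m) + η₁ m, fderiv ℝ X₂ m (X₁ m)))
      ((D1 γ (m, y, X₂ m)).comp
          ((0 : V →L[ℝ] M).prod
            (((D1 γ (m, y, X₁ m)).comp jV).prod (0 : V →L[ℝ] M)))
        + ((D2 γ (m, y, X₂ m)).comp jV).flip
            (X₁ m, γ m y (X₁ m) + η₁ m, fderiv ℝ X₂ m (X₁ m))) y :=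
    (sliceD1 hγ m (X₂ m) y).clm_apply
      ((hasFDerivAt_const (X₁ m) y).prodMk
        (((sliceγ hγ m (X₁ m) y).add_const (η₁ m)).prodMk
          (hasFDerivAt_const (fderiv ℝ X₂ m (X₁ m)) y)))
  have hT3 : HasFDerivAt
      (fun y' => D1 γ (m, y', X₁ m)
        (X₂ m, γ m y' (X₂ m) + η₂ m, fderiv ℝ X₁ m (X₂ m)))
      ((D1 γ (m, y, X₁ m)).comp
          ((0 : V →L[ℝ] M).prod
            (((D1 γ (m, y, X₂ m)).comp jV).prod (0 : V →L[ℝ] M)))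
        + ((D2 γ (m, y, X₁ m)).comp jV).flip
            (X₂ m, γ m y (X₂ m) + η₂ m, fderiv ℝ X₁ m (X₂ m))) y :=
    (sliceD1 hγ m (X₁ m) y).clm_apply
      ((hasFDerivAt_const (X₂ m) y).prodMk
        (((sliceγ hγ m (X₂ m) y).add_const (η₂ m)).prodMk
          (hasFDerivAt_const (fderiv ℝ X₁ m (X₂ m)) y)))
  have hT5 := sliceγ hγ m (XB X₁ X₂ m) y
  refine ⟨_, ((((hT1.add_const (fderiv ℝ η₂ m (X₁ m))).sub hT3).sub_const
      (fderiv ℝ η₁ m (X₂ m))).sub hT5), fun v => ?_⟩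
  simp only [ContinuousLinearMap.sub_apply, ContinuousLinearMap.add_apply,
    ContinuousLinearMap.comp_apply, ContinuousLinearMap.flip_apply,
    ContinuousLinearMap.prod_apply, ContinuousLinearMap.zero_apply, jV_apply,
    Psi, XB]
  rw [Dsym hγ (m, y, X₂ m) ((0 : M), (v, (0 : M)))
      (X₁ m, (γ m y (X₁ m) + η₁ m, fderiv ℝ X₂ m (X₁ m))),
    Dsym hγ (m, y, X₁ m) ((0 : M), (v, (0 : M)))
      (X₂ m, (γ m y (X₂ m) + η₂ m, fderiv ℝ X₁ m (X₂ m)))]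
  abel

lemma covD_hasFDerivAt {Y₂ : M × V → M × V} {σ : M × V → V}
    (h2 : ContDiff ℝ (⊤ : ℕ∞) Y₂) (hσ : ContDiff ℝ (⊤ : ℕ∞) σ) (p : M × V) :
    HasFDerivAt (covD γ Y₂ σ)
      (((fderiv ℝ σ p).comp (fderiv ℝ Y₂ p)
          + (fderiv ℝ (fderiv ℝ σ) p).flip (Y₂ p))
        - ((D1 γ (p.1, p.2, (Y₂ p).1)).comp (jV.comp (fderiv ℝ σ p))
          + ((D2 γ (p.1, p.2, (Y₂ p).1)).comp
              ((ContinuousLinearMap.fst ℝ M V).prod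
                ((ContinuousLinearMap.snd ℝ M V).prod
                  ((ContinuousLinearMap.fst ℝ M V).comp (fderiv ℝ Y₂ p))))).flip
            (jV (σ p)))) p := by
  have hfe : covD γ Y₂ σ
      = fun q => fderiv ℝ σ q (Y₂ q) - D1 γ (q.1, q.2, (Y₂ q).1) (jV (σ q)) := by
    funext q; exact covD_eq hγ Y₂ σ q
  rw [hfe]
  have hY₂' : HasFDerivAt Y₂ (fderiv ℝ Y₂ p) p := ((h2.differentiable le1) p).hasFDerivAt
  have hσ₀ : HasFDerivAt σ (fderiv ℝ σ p) p := ((hσ.differentiable le1) p).hasFDerivAt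
  have hσ' : HasFDerivAt (fderiv ℝ σ) (fderiv ℝ (fderiv ℝ σ) p) p :=
    (((hσ.fderiv_right leS).differentiable le1) p).hasFDerivAt
  have hA : HasFDerivAt (fun q => fderiv ℝ σ q (Y₂ q))
      ((fderiv ℝ σ p).comp (fderiv ℝ Y₂ p)
        + (fderiv ℝ (fderiv ℝ σ) p).flip (Y₂ p)) p := hσ'.clm_apply hY₂'
  have hζ₂ : HasFDerivAt (fun q : M × V => ((q.1, (q.2, (Y₂ q).1)) : M × V × M))
      ((ContinuousLinearMap.fst ℝ M V).prod
        ((ContinuousLinearMap.snd ℝ M V).prod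
          ((ContinuousLinearMap.fst ℝ M V).comp (fderiv ℝ Y₂ p)))) p :=
    hasFDerivAt_fst.prodMk (hasFDerivAt_snd.prodMk hY₂'.fst)
  have hc₂ : HasFDerivAt (fun q : M × V => D1 γ (q.1, q.2, (Y₂ q).1))
      ((D2 γ (p.1, p.2, (Y₂ p).1)).comp
        ((ContinuousLinearMap.fst ℝ M V).prod
          ((ContinuousLinearMap.snd ℝ M V).prod
            ((ContinuousLinearMap.fst ℝ M V).comp (fderiv ℝ Y₂ p))))) p :=
    ((((hD1 hγ).differentiable le1) ((p.1, (p.2, (Y₂ p).1)) : M × V × M)).hasFDerivAt.comp p hζ₂ :)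
  have hu₂ : HasFDerivAt (fun q : M × V => jV (σ q))
      ((jV (M := M)).comp (fderiv ℝ σ p)) p :=
    (((jV (M := M) (V := V)).hasFDerivAt).comp p hσ₀ :)
  exact hA.sub (hc₂.clm_apply hu₂)

set_option maxHeartbeats 1000000 in
lemma curvLin_eq {Y₁ Y₂ : M × V → M × V} {σ : M × V → V}
    (h1 : ContDiff ℝ (⊤ : ℕ∞) Y₁) (h2 : ContDiff ℝ (⊤ : ℕ∞) Y₂)
    (hσ : ContDiff ℝ (⊤ : ℕ∞) σ) (p : M × V) :
    curvLin γ Y₁ Y₂ σ p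
      = Psi γ p ((Y₁ p).1) ((Y₁ p).2) ((Y₂ p).1) ((Y₂ p).2)
          ((fderiv ℝ Y₁ p (Y₂ p)).1) ((fderiv ℝ Y₂ p (Y₁ p)).1) (σ p) := by
  have hσsym : fderiv ℝ (fderiv ℝ σ) p (Y₁ p) (Y₂ p)
      = fderiv ℝ (fderiv ℝ σ) p (Y₂ p) (Y₁ p) :=
    second_derivative_symmetric
      (fun q => ((hσ.differentiable le1) q).hasFDerivAt)
      ((((hσ.fderiv_right leS).differentiable le1) p).hasFDerivAt) _ _
  have e1 : covD γ Y₁ (covD γ Y₂ σ) p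
      = fderiv ℝ (covD γ Y₂ σ) p (Y₁ p)
        - D1 γ (p.1, p.2, (Y₁ p).1) (jV (covD γ Y₂ σ p)) := covD_eq hγ _ _ p
  have e2 : covD γ Y₂ (covD γ Y₁ σ) p
      = fderiv ℝ (covD γ Y₁ σ) p (Y₂ p)
        - D1 γ (p.1, p.2, (Y₂ p).1) (jV (covD γ Y₁ σ p)) := covD_eq hγ _ _ p
  have e3 : covD γ (lieBkt Y₁ Y₂) σ p
      = fderiv ℝ σ p (lieBkt Y₁ Y₂ p)
        - D1 γ (p.1, p.2, (lieBkt Y₁ Y₂ p).1) (jV (σ p)) := covD_eq hγ _ _ p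
  have f2 := (covD_hasFDerivAt hγ h2 hσ p).fderiv
  have f1 := (covD_hasFDerivAt hγ h1 hσ p).fderiv
  have v2 := covD_eq hγ Y₂ σ p
  have v1 := covD_eq hγ Y₁ σ p
  simp only [curvLin, e1, e2, e3, f1, f2, v1, v2, lieBkt,
    ContinuousLinearMap.sub_apply, ContinuousLinearMap.add_apply,
    ContinuousLinearMap.comp_apply, ContinuousLinearMap.flip_apply,
    ContinuousLinearMap.prod_apply, ContinuousLinearMap.coe_fst',
    ContinuousLinearMap.coe_snd', map_sub, map_add, Prod.fst_sub, Psi]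
  rw [hσsym]
  abel

lemma contDiff_Sfun (hX₁ : ContDiff ℝ (⊤ : ℕ∞) X₁) (hX₂ : ContDiff ℝ (⊤ : ℕ∞) X₂)
    (hη₁ : ContDiff ℝ (⊤ : ℕ∞) η₁) (hη₂ : ContDiff ℝ (⊤ : ℕ∞) η₂) :
    ContDiff ℝ (⊤ : ℕ∞) (Sfun γ X₁ X₂ η₁ η₂) := by
  have gam : ∀ {X : M → M}, ContDiff ℝ (⊤ : ℕ∞) X →
      ContDiff ℝ (⊤ : ℕ∞) (fun p : M × V => γ p.1 p.2 (X p.1)) := fun hX =>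
    hγ.comp (contDiff_fst.prodMk (contDiff_snd.prodMk (hX.comp contDiff_fst)))
  have hd : ∀ {X X' : M → M}, ContDiff ℝ (⊤ : ℕ∞) X → ContDiff ℝ (⊤ : ℕ∞) X' →
      ContDiff ℝ (⊤ : ℕ∞) (fun p : M × V => fderiv ℝ X p.1 (X' p.1)) := fun hX hX' =>
    ((hX.fderiv_right leS).comp contDiff_fst).clm_apply (hX'.comp contDiff_fst)
  have t1 : ContDiff ℝ (⊤ : ℕ∞) (fun p : M × V =>
      D1 γ (p.1, p.2, X₂ p.1)
        (X₁ p.1, γ p.1 p.2 (X₁ p.1) + η₁ p.1, fderiv ℝ X₂ p.1 (X₁ p.1))) :=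
    (((hD1 hγ).comp (contDiff_fst.prodMk (contDiff_snd.prodMk (hX₂.comp contDiff_fst)))).clm_apply
      ((hX₁.comp contDiff_fst).prodMk
        (((gam hX₁).add (hη₁.comp contDiff_fst)).prodMk (hd hX₂ hX₁))))
  have t3 : ContDiff ℝ (⊤ : ℕ∞) (fun p : M × V =>
      D1 γ (p.1, p.2, X₁ p.1)
        (X₂ p.1, γ p.1 p.2 (X₂ p.1) + η₂ p.1, fderiv ℝ X₁ p.1 (X₂ p.1))) :=
    (((hD1 hγ).comp (contDiff_fst.prodMk (contDiff_snd.prodMk (hX₁.comp contDiff_fst)))).clm_apply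
      ((hX₂.comp contDiff_fst).prodMk
        (((gam hX₂).add (hη₂.comp contDiff_fst)).prodMk (hd hX₁ hX₂))))
  have t2 : ContDiff ℝ (⊤ : ℕ∞) (fun p : M × V => fderiv ℝ η₂ p.1 (X₁ p.1)) :=
    ((hη₂.fderiv_right leS).comp contDiff_fst).clm_apply (hX₁.comp contDiff_fst)
  have t4 : ContDiff ℝ (⊤ : ℕ∞) (fun p : M × V => fderiv ℝ η₁ p.1 (X₂ p.1)) :=
    ((hη₁.fderiv_right leS).comp contDiff_fst).clm_apply (hX₂.comp contDiff_fst)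
  have hXB : ContDiff ℝ (⊤ : ℕ∞) (XB X₁ X₂) :=
    (((hX₂.fderiv_right leS).clm_apply hX₁).sub ((hX₁.fderiv_right leS).clm_apply hX₂))
  have t5 : ContDiff ℝ (⊤ : ℕ∞) (fun p : M × V => γ p.1 p.2 (XB X₁ X₂ p.1)) := gam hXB
  exact ((((t1.add t2).sub t3).sub t4).sub t5)

omit hγ

lemma exists_clm (u ξ : M) (h : u ≠ 0 ∨ ξ = 0) : ∃ L : M →L[ℝ] M, L u = ξ := by
  rcases h with h | h
  · obtain ⟨g, -, hgu⟩ := exists_dual_vector ℝ u (norm_ne_zero_iff.mpr h)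
    refine ⟨g.smulRight (‖u‖⁻¹ • ξ), ?_⟩
    have : g u = (‖u‖ : ℝ) := hgu
    rw [ContinuousLinearMap.smulRight_apply, this, smul_smul,
      mul_inv_cancel₀ (norm_ne_zero_iff.mpr h), one_smul]
  · exact ⟨0, by simp [h]⟩

include hγ

lemma Psi_zero_all
    (h0 : ∀ (p : M × V) (u₁ : M) (w₁ : V) (u₂ : M) (w₂ : V) (ξ₁ ξ₂ : M) (v : V),
      (u₁ ≠ 0 ∨ ξ₂ = 0) → (u₂ ≠ 0 ∨ ξ₁ = 0) → Psi γ p u₁ w₁ u₂ w₂ ξ₁ ξ₂ v = 0)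
    (p : M × V) (u₁ : M) (w₁ : V) (u₂ : M) (w₂ : V) (ξ₁ ξ₂ : M) (v : V) :
    Psi γ p u₁ w₁ u₂ w₂ ξ₁ ξ₂ v = 0 := by
  classical
  by_cases hM : ∃ z : M, z ≠ 0
  · obtain ⟨z, hz⟩ := hM
    set z₁ : M := if u₁ = 0 then z else 0 with hz₁def
    set z₂ : M := if u₂ = 0 then z else 0 with hz₂def
    set f : ℝ → V := fun t => Psi γ p (u₁ + t • z₁) w₁ (u₂ + t • z₂) w₂ ξ₁ ξ₂ v with hf
    have hne : ∀ (u zz : M), zz = (if u = 0 then z else 0) → ∀ t : ℝ, t ≠ 0 →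
        u + t • zz ≠ 0 := by
      intro u zz hzz t ht
      by_cases hu : u = 0
      · subst hu
        rw [hzz, if_pos rfl, zero_add]
        exact smul_ne_zero ht hz
      · rw [hzz, if_neg hu, smul_zero, add_zero]
        exact hu
    have hkey : ∀ t : ℝ, t ≠ 0 → f t = 0 := fun t ht =>
      h0 _ _ _ _ _ _ _ _ (Or.inl (hne u₁ z₁ hz₁def t ht)) (Or.inl (hne u₂ z₂ hz₂def t ht))
    have ha₁ : Continuous fun t : ℝ => u₁ + t • z₁ :=
      continuous_const.add (continuous_id.smul continuous_const)
    have ha₂ : Continuous fun t : ℝ => u₂ + t • z₂ :=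
      continuous_const.add (continuous_id.smul continuous_const)
    have hc₁ : Continuous fun t : ℝ => ((p.1, (p.2, u₁ + t • z₁)) : M × V × M) :=
      continuous_const.prodMk (continuous_const.prodMk ha₁)
    have hc₂ : Continuous fun t : ℝ => ((p.1, (p.2, u₂ + t • z₂)) : M × V × M) :=
      continuous_const.prodMk (continuous_const.prodMk ha₂)
    have hD1c := (hD1 hγ).continuous
    have hD2c := (hD2 hγ).continuous
    have hcont : Continuous f := by
      simp only [hf, Psi]
      exact (((((((hD2c.comp hc₁).clm_apply
              ((ha₂.prodMk (continuous_const.prodMk continuous_const)))).clm_apply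
            continuous_const).sub
          (((hD2c.comp hc₂).clm_apply
              ((ha₁.prodMk (continuous_const.prodMk continuous_const)))).clm_apply
            continuous_const)).add
          ((hD1c.comp hc₁).clm_apply
            ((jV (M := M) (V := V)).continuous.comp
              ((hD1c.comp hc₂).clm_apply continuous_const)))).sub
          ((hD1c.comp hc₂).clm_apply
            ((jV (M := M) (V := V)).continuous.comp
              ((hD1c.comp hc₁).clm_apply continuous_const)))).add
          continuous_const)
    have hlim1 : Filter.Tendsto f (nhdsWithin (0 : ℝ) {(0 : ℝ)}ᶜ) (nhds (f 0)) :=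
      (hcont.tendsto 0).mono_left nhdsWithin_le_nhds
    have heq : (fun _ : ℝ => (0 : V)) =ᶠ[nhdsWithin (0 : ℝ) {(0 : ℝ)}ᶜ] f := by
      filter_upwards [self_mem_nhdsWithin] with t ht
      exact (hkey t ht).symm
    have hlim2 : Filter.Tendsto f (nhdsWithin (0 : ℝ) {(0 : ℝ)}ᶜ) (nhds (0 : V)) :=
      Filter.Tendsto.congr' heq tendsto_const_nhds
    have hf0 : f 0 = 0 := tendsto_nhds_unique hlim1 hlim2
    have : Psi γ p (u₁ + (0 : ℝ) • z₁) w₁ (u₂ + (0 : ℝ) • z₂) w₂ ξ₁ ξ₂ v = 0 := hf0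
    simpa using this
  · push_neg at hM
    exact h0 p u₁ w₁ u₂ w₂ ξ₁ ξ₂ v (Or.inr (hM ξ₂)) (Or.inr (hM ξ₁))

lemma expr_eq_Sfun (hX₁ : ContDiff ℝ (⊤ : ℕ∞) X₁) (hX₂ : ContDiff ℝ (⊤ : ℕ∞) X₂)
    (hη₁ : ContDiff ℝ (⊤ : ℕ∞) η₁) (hη₂ : ContDiff ℝ (⊤ : ℕ∞) η₂) (p : M × V) :
    curvHor γ X₁ X₂ p + covD γ (hLift γ X₁) (fun q => η₂ q.1) p
      - covD γ (hLift γ X₂) (fun q => η₁ q.1) p = Sfun γ X₁ X₂ η₁ η₂ p := by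
  have d1 := (hasFDerivAt_hLift hγ hX₁ p).fderiv
  have d2 := (hasFDerivAt_hLift hγ hX₂ p).fderiv
  have e1 : HasFDerivAt (fun q : M × V => η₁ q.1)
      ((fderiv ℝ η₁ p.1).comp (ContinuousLinearMap.fst ℝ M V)) p :=
    ((((hη₁.differentiable le1) p.1).hasFDerivAt).comp p hasFDerivAt_fst :)
  have e2 : HasFDerivAt (fun q : M × V => η₂ q.1)
      ((fderiv ℝ η₂ p.1).comp (ContinuousLinearMap.fst ℝ M V)) p :=
    ((((hη₂.differentiable le1) p.1).hasFDerivAt).comp p hasFDerivAt_fst :)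
  have split : ∀ (zz : M × V × M) (a : M) (b c : V) (d : M),
      D1 γ zz (a, b + c, d) = D1 γ zz (a, b, d) + D1 γ zz ((0 : M), c, (0 : M)) := by
    intro zz a b c d
    rw [← map_add]
    congr 1
    simp [Prod.ext_iff]
  simp only [curvHor, connector, lieBkt, covD_eq hγ, d1, d2, e1.fderiv, e2.fderiv,
    hLift, Sfun, XB, split, ContinuousLinearMap.add_apply, ContinuousLinearMap.comp_apply,
    ContinuousLinearMap.prod_apply, ContinuousLinearMap.coe_fst', ContinuousLinearMap.coe_snd',
    ΛX_apply, jV_apply, Prod.fst_sub, Prod.snd_sub, map_sub]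
  abel

end Flat19

open Flat19 in
/-- the following are equivalent: (1) the linearized connection is flat;
(2) the Hor-basic vector fields are closed under Lie bracket; (3) `κ([Y₁,Y₂])` is basic
for all Hor-basic `Y₁, Y₂`; (4) `R(X₁,X₂) + D_{X₁^H}η₂ - D_{X₂^H}η₁` is basic for all
`X₁, X₂ ∈ 𝔛(M)` and `η₁, η₂ ∈ Sec(E)`. -/
theorem linearized_connection_flat_tfae
    (γ : M → V → M → V)
    (hγ : ContDiff ℝ (⊤ : ℕ∞) (fun p : M × V × M => γ p.1 p.2.1 p.2.2)) :
    List.TFAE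
      [ (∀ (Y₁ Y₂ : M × V → M × V) (σ : M × V → V),
          ContDiff ℝ (⊤ : ℕ∞) Y₁ → ContDiff ℝ (⊤ : ℕ∞) Y₂ →
          ContDiff ℝ (⊤ : ℕ∞) σ → ∀ p, curvLin γ Y₁ Y₂ σ p = 0),
        (∀ Y₁ Y₂ : M × V → M × V, IsHorBasic γ Y₁ → IsHorBasic γ Y₂ →
          IsHorBasic γ (lieBkt Y₁ Y₂)),
        (∀ Y₁ Y₂ : M × V → M × V, IsHorBasic γ Y₁ → IsHorBasic γ Y₂ →
          IsBasicSec (connector γ (lieBkt Y₁ Y₂))),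
        (∀ (X₁ X₂ : M → M) (η₁ η₂ : M → V),
          ContDiff ℝ (⊤ : ℕ∞) X₁ → ContDiff ℝ (⊤ : ℕ∞) X₂ →
          ContDiff ℝ (⊤ : ℕ∞) η₁ → ContDiff ℝ (⊤ : ℕ∞) η₂ →
          IsBasicSec (fun p => curvHor γ X₁ X₂ p
            + covD γ (hLift γ X₁) (fun q => η₂ q.1) p
            - covD γ (hLift γ X₂) (fun q => η₁ q.1) p)) ] := by
  tfae_have 1 → 4 := by
    intro h1 X₁ X₂ η₁ η₂ hX₁ hX₂ hη₁ hη₂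
    have hY₁s := contDiff_Yb hγ hX₁ hη₁
    have hY₂s := contDiff_Yb hγ hX₂ hη₂
    have hdiff : ∀ (m : M) (y : V),
        HasFDerivAt (fun y' => Sfun γ X₁ X₂ η₁ η₂ (m, y')) (0 : V →L[ℝ] V) y := by
      intro m y
      obtain ⟨Φ, hΦ, hΦv⟩ := S2 hγ hX₁ hX₂ hη₁ hη₂ m y
      have hΦ0 : Φ = 0 := by
        ext v
        rw [hΦv v]
        have hz := h1 (Yb γ X₁ η₁) (Yb γ X₂ η₂) (fun _ => v) hY₁s hY₂s contDiff_const (m, y)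
        rw [curvLin_eq hγ hY₁s hY₂s contDiff_const (m, y)] at hz
        simp only [Yb_apply hγ, fderiv_Yb_apply hγ hX₁ hη₁, fderiv_Yb_apply hγ hX₂ hη₂] at hz
        simp [hz]
      rw [hΦ0] at hΦ
      exact hΦ
    have hconst : ∀ (m : M) (y : V),
        Sfun γ X₁ X₂ η₁ η₂ (m, y) = Sfun γ X₁ X₂ η₁ η₂ (m, 0) := fun m y =>
      is_const_of_fderiv_eq_zero (fun y' => (hdiff m y').differentiableAt)
        (fun y' => (hdiff m y').fderiv) y 0
    refine ⟨fun m => Sfun γ X₁ X₂ η₁ η₂ (m, 0), fun p => ?_⟩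
    show curvHor γ X₁ X₂ p + covD γ (hLift γ X₁) (fun q => η₂ q.1) p
      - covD γ (hLift γ X₂) (fun q => η₁ q.1) p = Sfun γ X₁ X₂ η₁ η₂ (p.1, 0)
    rw [expr_eq_Sfun hγ hX₁ hX₂ hη₁ hη₂ p]
    simpa using hconst p.1 p.2
  tfae_have 4 → 3 := by
    intro h4 Y₁ Y₂ hb₁ hb₂
    obtain ⟨X₁, η₁, hX₁, hη₁, hY₁⟩ := hb₁
    obtain ⟨X₂, η₂, hX₂, hη₂, hY₂⟩ := hb₂
    have hE₁ : Y₁ = Yb γ X₁ η₁ := funext hY₁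
    have hE₂ : Y₂ = Yb γ X₂ η₂ := funext hY₂
    subst hE₁ hE₂
    obtain ⟨α, hα⟩ := h4 X₁ X₂ η₁ η₂ hX₁ hX₂ hη₁ hη₂
    refine ⟨α, fun p => ?_⟩
    rw [s_eq hγ hX₁ hX₂ hη₁ hη₂ p, ← expr_eq_Sfun hγ hX₁ hX₂ hη₁ hη₂ p]
    exact hα p
  tfae_have 3 → 2 := by
    intro h3 Y₁ Y₂ hb₁ hb₂
    obtain ⟨X₁, η₁, hX₁, hη₁, hY₁⟩ := hb₁
    obtain ⟨X₂, η₂, hX₂, hη₂, hY₂⟩ := hb₂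
    obtain ⟨α, hα⟩ := h3 Y₁ Y₂ ⟨X₁, η₁, hX₁, hη₁, hY₁⟩ ⟨X₂, η₂, hX₂, hη₂, hY₂⟩
    have hE₁ : Y₁ = Yb γ X₁ η₁ := funext hY₁
    have hE₂ : Y₂ = Yb γ X₂ η₂ := funext hY₂
    subst hE₁ hE₂
    refine ⟨XB X₁ X₂, fun m => Sfun γ X₁ X₂ η₁ η₂ (m, 0),
      ((hX₂.fderiv_right leS).clm_apply hX₁).sub ((hX₁.fderiv_right leS).clm_apply hX₂),
      (contDiff_Sfun hγ hX₁ hX₂ hη₁ hη₂).comp (contDiff_id.prodMk contDiff_const),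
      fun p => ?_⟩
    have h2 : Sfun γ X₁ X₂ η₁ η₂ (p.1, 0) = α p.1 :=
      (s_eq hγ hX₁ hX₂ hη₁ hη₂ ((p.1, 0) : M × V)).symm.trans (hα ((p.1, 0) : M × V))
    have h1 := hα p
    simp only [connector] at h1
    rw [lieBkt_Yb_fst hγ hX₁ hX₂ hη₁ hη₂ p] at h1
    have hsnd := sub_eq_iff_eq_add.mp h1
    refine Prod.ext ?_ ?_
    · rw [lieBkt_Yb_fst hγ hX₁ hX₂ hη₁ hη₂ p]
      simp [hLift, vLift]
    · rw [hsnd]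
      simp only [Prod.snd_add, hLift, vLift]
      rw [h2]
      abel
  tfae_have 2 → 3 := by
    intro h2 Y₁ Y₂ hb₁ hb₂
    obtain ⟨X, η, hX, hη, hY⟩ := h2 Y₁ Y₂ hb₁ hb₂
    refine ⟨η, fun p => ?_⟩
    simp [connector, hY p, hLift, vLift]
  tfae_have 3 → 1 := by
    intro h3 Y₁ Y₂ σ hY₁ hY₂ hσ p
    rw [curvLin_eq hγ hY₁ hY₂ hσ p]
    refine Psi_zero_all hγ ?_ p _ _ _ _ _ _ _
    intro q u₁ w₁ u₂ w₂ ξ₁ ξ₂ v hc₁ hc₂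
    obtain ⟨L₁, hL₁⟩ := exists_clm u₂ ξ₁ hc₂
    obtain ⟨L₂, hL₂⟩ := exists_clm u₁ ξ₂ hc₁
    set X₁ : M → M := fun m' => u₁ + L₁ (m' - q.1) with hX₁def
    set X₂ : M → M := fun m' => u₂ + L₂ (m' - q.1) with hX₂def
    set η₁ : M → V := fun _ => w₁ - γ q.1 q.2 u₁ with hη₁def
    set η₂ : M → V := fun _ => w₂ - γ q.1 q.2 u₂ with hη₂def
    have hX₁ : ContDiff ℝ (⊤ : ℕ∞) X₁ :=
      contDiff_const.add (L₁.contDiff.comp (contDiff_id.sub contDiff_const))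
    have hX₂ : ContDiff ℝ (⊤ : ℕ∞) X₂ :=
      contDiff_const.add (L₂.contDiff.comp (contDiff_id.sub contDiff_const))
    have hη₁ : ContDiff ℝ (⊤ : ℕ∞) η₁ := contDiff_const
    have hη₂ : ContDiff ℝ (⊤ : ℕ∞) η₂ := contDiff_const
    have hX₁d : ∀ m : M, HasFDerivAt X₁ (L₁.comp (ContinuousLinearMap.id ℝ M)) m :=
      fun m => ((L₁.hasFDerivAt.comp m ((hasFDerivAt_id m).sub_const q.1)).const_add u₁ :)
    have hX₂d : ∀ m : M, HasFDerivAt X₂ (L₂.comp (ContinuousLinearMap.id ℝ M)) m :=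
      fun m => ((L₂.hasFDerivAt.comp m ((hasFDerivAt_id m).sub_const q.1)).const_add u₂ :)
    have hX₁v : X₁ q.1 = u₁ := by simp [hX₁def]
    have hX₂v : X₂ q.1 = u₂ := by simp [hX₂def]
    obtain ⟨α, hα⟩ := h3 (Yb γ X₁ η₁) (Yb γ X₂ η₂)
      ⟨X₁, η₁, hX₁, hη₁, fun _ => rfl⟩ ⟨X₂, η₂, hX₂, hη₂, fun _ => rfl⟩
    have hSα : ∀ r : M × V, Sfun γ X₁ X₂ η₁ η₂ r = α r.1 := fun r =>
      (s_eq hγ hX₁ hX₂ hη₁ hη₂ r).symm.trans (hα r)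
    obtain ⟨Φ, hΦ, hΦv⟩ := S2 hγ hX₁ hX₂ hη₁ hη₂ q.1 q.2
    have hconst : HasFDerivAt (fun y' => Sfun γ X₁ X₂ η₁ η₂ (q.1, y'))
        (0 : V →L[ℝ] V) q.2 := by
      have he : (fun y' => Sfun γ X₁ X₂ η₁ η₂ (q.1, y')) = fun _ => α q.1 :=
        funext fun y' => hSα ((q.1, y') : M × V)
      rw [he]
      exact hasFDerivAt_const _ _
    have hΦ0 : Φ = 0 := hΦ.unique hconst
    have hval := hΦv v
    rw [hΦ0] at hval
    have hfd₁ : fderiv ℝ X₁ q.1 (X₂ q.1) = ξ₁ := by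
      rw [(hX₁d q.1).fderiv, hX₂v]
      simpa using hL₁
    have hfd₂ : fderiv ℝ X₂ q.1 (X₁ q.1) = ξ₂ := by
      rw [(hX₂d q.1).fderiv, hX₁v]
      simpa using hL₂
    have hw₁ : γ q.1 q.2 (X₁ q.1) + η₁ q.1 = w₁ := by
      rw [hX₁v]
      simp only [hη₁def]
      abel
    have hw₂ : γ q.1 q.2 (X₂ q.1) + η₂ q.1 = w₂ := by
      rw [hX₂v]
      simp only [hη₂def]
      abel
    rw [hfd₁, hfd₂, hw₁, hw₂, hX₁v, hX₂v] at hval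
    have : Psi γ ((q.1, q.2) : M × V) u₁ w₁ u₂ w₂ ξ₁ ξ₂ v = 0 := by
      have h0 : (0 : V →L[ℝ] V) v = 0 := rfl
      rw [h0] at hval
      exact (neg_eq_zero.mp hval.symm)
    simpa using this
  tfae_finish


end Lin
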